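/- Let $A$ be an $RG$-module and $P_* \to A$ an $\mathfrak{F}$-split resolution of finite length $n$ with $P_i$ $\mathfrak{F}$-projective for all $i \geq 1$. Then the augmented complex $P_* \to A$ is $\mathfrak{F}_G$-proper, i.e. $\mathrm{Hom}_{RG}(Q, -)$ applied to it remains exact for every $\mathfrak{F}_G$-projective module $Q$. -/

import Mathlib

open CategoryTheory CategoryTheory.Limits CategoryTheory.MonoidalCategory

noncomputable section
namespace FPaper

variable (R : Type) [CommRing R] (G : Type) [Group G]

/-- The disjoint union `Δ = ⨿_{H finite} G/H` of coset spaces of finite subgroups. -/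
def DeltaType : Type := Σ H : {H : Subgroup G // Finite H}, G ⧸ H.1

instance : SMul G (DeltaType G) := ⟨fun g x => ⟨x.1, g • x.2⟩⟩

instance : MulAction G (DeltaType G) where
  one_smul x := by cases x with | mk H q => show (⟨H, (1:G) • q⟩ : DeltaType G) = ⟨H, q⟩; rw [one_smul]
  mul_smul g h x := by
    cases x with | mk H q =>
    show (⟨H, (g*h) • q⟩ : DeltaType G) = ⟨H, g • h • q⟩
    rw [mul_smul]

/-- The permutation module `RΔ`. -/
def RDelta : Rep R G := Rep.ofMulAction R G (DeltaType G)

/-- A module is `𝔉`-projective if it is a direct summand of some `N ⊗ RΔ`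
(diagonal `G`-action). -/
def FProjective (M : Rep R G) : Prop :=
  ∃ (N : Rep R G) (i : M ⟶ N ⊗ RDelta R G) (r : N ⊗ RDelta R G ⟶ M), i ≫ r = 𝟙 M

/-- Restriction to a subgroup. -/
def resF (K : Subgroup G) : Rep R G ⥤ Rep R K :=
  Rep.resFunctor K.subtype

/-- A resolution `⋯ → P₁ → P₀ → M → 0`. -/
structure Res (M : Rep R G) where
  P : ℕ → Rep R G
  d : ∀ n, P (n+1) ⟶ P n
  ε : P 0 ⟶ M
  surj : Function.Surjective ε.hom
  exact0 : Function.Exact (d 0).hom ε.hom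
  exact : ∀ n, Function.Exact (d (n+1)).hom (d n).hom

variable {R G}

/-- The (augmented) resolution is split exact over every finite subgroup:
there is an `RK`-linear chain contraction for every finite `K ≤ G`. -/
def Res.FSplit {M : Rep R G} (res : Res R G M) : Prop :=
  ∀ K : Subgroup G, Finite K →
    ∃ (t : (resF R G K).obj M ⟶ (resF R G K).obj (res.P 0))
      (s : ∀ n, (resF R G K).obj (res.P n) ⟶ (resF R G K).obj (res.P (n+1))),
      t ≫ (resF R G K).map res.ε = 𝟙 _ ∧
      (resF R G K).map res.ε ≫ t + s 0 ≫ (resF R G K).map (res.d 0) = 𝟙 _ ∧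
      ∀ n, (resF R G K).map (res.d n) ≫ s n + s (n+1) ≫ (resF R G K).map (res.d (n+1)) = 𝟙 _

/-- All modules in the resolution are `𝔉`-projective. -/
def Res.FProj {M : Rep R G} (res : Res R G M) : Prop := ∀ n, FProjective R G (res.P n)

/-- The resolution has length at most `n`. -/
def Res.LengthLe {M : Rep R G} (res : Res R G M) (n : ℕ) : Prop :=
  ∀ i, n < i → IsZero (res.P i)


/-- `M` is `𝔉_G`-projective: it is a cokernel in an `𝔉`-strong `𝔉`-complete
resolution, i.e. an acyclic `𝔉`-split `ℤ`-indexed complex of `𝔉`-projectives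
which stays exact under `Hom(-, Q)` for every `𝔉`-projective `Q`. -/
def FGProjective (R : Type) [CommRing R] (G : Type) [Group G] (M : Rep R G) : Prop :=
  ∃ (T : ℤ → Rep R G) (d : ∀ n : ℤ, T (n+1) ⟶ T n) (π : T 0 ⟶ M),
    (∀ n, FProjective R G (T n)) ∧
    (∀ n : ℤ, Function.Exact (d (n+1)).hom (d n).hom) ∧
    (∀ K : Subgroup G, Finite K →
      ∃ s : ∀ n : ℤ, (resF R G K).obj (T n) ⟶ (resF R G K).obj (T (n+1)),
        ∀ n : ℤ, (resF R G K).map (d n) ≫ s n + s (n+1) ≫ (resF R G K).map (d (n+1)) = 𝟙 _) ∧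
    Function.Surjective π.hom ∧ Function.Exact (d 0).hom π.hom ∧
    (∀ Q : Rep R G, FProjective R G Q → ∀ (n : ℤ) (φ : T (n+1) ⟶ Q),
      d (n+1) ≫ φ = 0 → ∃ ψ : T n ⟶ Q, φ = d n ≫ ψ)

variable (R : Type) [CommRing R] (G : Type) [Group G]

/-- A right resolution `0 → M → T⁰ → T¹ → ⋯`. -/
structure CoRes (M : Rep R G) where
  T : ℕ → Rep R G
  ι : M ⟶ T 0
  d : ∀ n, T n ⟶ T (n+1)
  inj : Function.Injective ι.hom
  exact0 : Function.Exact ι.hom (d 0).hom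
  exact : ∀ n, Function.Exact (d n).hom (d (n+1)).hom

variable {R G}

/-- All terms of the right resolution are `𝔉`-projective. -/
def CoRes.FProj {M : Rep R G} (c : CoRes R G M) : Prop := ∀ n, FProjective R G (c.T n)

/-- The right resolution is `𝔉`-split: it admits an `RK`-linear chain
contraction for every finite subgroup `K ≤ G`. -/
def CoRes.FSplit {M : Rep R G} (c : CoRes R G M) : Prop :=
  ∀ K : Subgroup G, Finite K →
    ∃ (h0 : (resF R G K).obj (c.T 0) ⟶ (resF R G K).obj M)
      (h : ∀ n, (resF R G K).obj (c.T (n+1)) ⟶ (resF R G K).obj (c.T n)),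
      (resF R G K).map c.ι ≫ h0 = 𝟙 _ ∧
      h0 ≫ (resF R G K).map c.ι + (resF R G K).map (c.d 0) ≫ h 0 = 𝟙 _ ∧
      ∀ n, h n ≫ (resF R G K).map (c.d n)
        + (resF R G K).map (c.d (n+1)) ≫ h (n+1) = 𝟙 _

/-- The right resolution is `𝔉`-strong: it stays exact under `Hom_{RG}(-, Q)`
for every `𝔉`-projective `Q`. -/
def CoRes.FStrong {M : Rep R G} (c : CoRes R G M) : Prop :=
  ∀ Q : Rep R G, FProjective R G Q →
    (∀ φ : M ⟶ Q, ∃ ψ : c.T 0 ⟶ Q, c.ι ≫ ψ = φ) ∧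
    (∀ φ : c.T 0 ⟶ Q, c.ι ≫ φ = 0 → ∃ ψ : c.T 1 ⟶ Q, φ = c.d 0 ≫ ψ) ∧
    (∀ (n : ℕ) (φ : c.T (n+1) ⟶ Q), c.d n ≫ φ = 0 →
      ∃ ψ : c.T (n+2) ⟶ Q, φ = c.d (n+1) ≫ ψ)


section Aux
variable {R : Type} [CommRing R] {G : Type} [Group G]

/-- Evaluate a `Rep` morphism equality at an element. -/
lemma hom_eval {X Y : Rep R G} {f g : X ⟶ Y} (h : f = g) (x : X) : f.hom x = g.hom x := by
  rw [h]

lemma comp_eval {X Y Z : Rep R G} (f : X ⟶ Y) (g : Y ⟶ Z) (x : X) :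
    (f ≫ g).hom x = g.hom (f.hom x) := rfl

/-- Cancel a surjection on the left. -/
lemma cancel_surj {X Y Z : Rep R G} (π : X ⟶ Y) (hs : Function.Surjective π.hom)
    {g h : Y ⟶ Z} (H : π ≫ g = π ≫ h) : g = h := by
  ext y
  obtain ⟨x, rfl⟩ := hs y
  exact hom_eval H x

/-- Descend a morphism along a surjection whose kernel it kills. -/
lemma descend {T0 Q M : Rep R G} (π : T0 ⟶ Q) (hsurj : Function.Surjective π.hom)
    (g0 : T0 ⟶ M) (hker : ∀ z, π.hom z = 0 → g0.hom z = 0) :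
    ∃ ψ : Q ⟶ M, π ≫ ψ = g0 := by
  have hker' : LinearMap.ker π.hom.toLinearMap ≤ LinearMap.ker g0.hom.toLinearMap := fun x hx => hker x hx
  let e := LinearMap.quotKerEquivOfSurjective π.hom.toLinearMap hsurj
  let ψ0 : Q.V →ₗ[R] M.V :=
    (Submodule.liftQ _ g0.hom.toLinearMap hker').comp e.symm.toLinearMap
  have hψ0 : ∀ z : T0, ψ0 (π.hom z) = g0.hom z := by
    intro z
    have h1 : e.symm (π.hom z) = Submodule.Quotient.mk z := by
      apply e.injective
      simp [e, LinearMap.quotKerEquivOfSurjective]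
    simp only [ψ0, LinearMap.comp_apply, LinearEquiv.coe_coe, h1, Submodule.liftQ_apply,
      Representation.IntertwiningMap.toLinearMap_apply]
  refine ⟨ConcreteCategory.ofHom (C := Rep R G) ⟨ψ0, fun g => ?_⟩, ?_⟩
  · ext q
    obtain ⟨z, rfl⟩ := hsurj q
    show ψ0 (Q.ρ g (π.hom z)) = M.ρ g (ψ0 (π.hom z))
    rw [← Rep.hom_comm_apply π g z, hψ0, hψ0, Rep.hom_comm_apply]
  · ext z
    exact hψ0 z

/-- A morphism vanishing elementwise is zero. -/
lemma comp_eq_zero {X Y Z : Rep R G} {f : X ⟶ Y} {g : Y ⟶ Z}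
    (h : ∀ x, g.hom (f.hom x) = 0) : f ≫ g = 0 := by
  ext x; exact h x

/-- The key relative-projectivity lifting lemma. -/
lemma liftC {W X Y : Rep R G} (hW : FProjective R G W) (e : X ⟶ Y) (f : W ⟶ Y)
    (hsec : ∀ H : Subgroup G, Finite H →
      ∃ σ : (resF R G H).obj Y ⟶ (resF R G H).obj X,
        ∀ w : W, e.hom (σ.hom (f.hom w)) = f.hom w) :
    ∃ l : W ⟶ X, l ≫ e = f := by
  classical
  obtain ⟨N, i, r, hir⟩ := hW
  unfold RDelta at i r hir
  choose σ hσ using hsec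
  set F : N ⊗ Rep.ofMulAction R G (DeltaType G) ⟶ Y := r ≫ f with hF
  -- the map defined on `v ⊗ δ_x`
  let Λ : DeltaType G → (N.V →ₗ[R] X.V) := fun x =>
    (X.ρ x.2.out ∘ₗ (σ x.1.1 x.1.2).hom.toLinearMap ∘ₗ Y.ρ x.2.out⁻¹ ∘ₗ F.hom.toLinearMap) ∘ₗ
      (TensorProduct.mk R N.V (MonoidAlgebra R (DeltaType G))).flip (MonoidAlgebra.single x 1)
  let L0 : (N ⊗ Rep.ofMulAction R G (DeltaType G)).V →ₗ[R] X.V :=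
    TensorProduct.lift ((Finsupp.lift (N.V →ₗ[R] X.V) R (DeltaType G) Λ ∘ₗ
      (MonoidAlgebra.coeffLinearEquiv R).toLinearMap).flip)
  have L0app : ∀ (v : N.V) (x : DeltaType G),
      L0 (v ⊗ₜ[R] MonoidAlgebra.single x (1:R)) =
        X.ρ x.2.out ((σ x.1.1 x.1.2).hom (Y.ρ x.2.out⁻¹
          (F.hom (v ⊗ₜ[R] MonoidAlgebra.single x 1)))) := by
    intro v x
    show TensorProduct.lift _ _ = _
    rw [TensorProduct.lift.tmul]
    show (Finsupp.lift (N.V →ₗ[R] X.V) R (DeltaType G) Λ) (Finsupp.single x 1) v = _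
    rw [Finsupp.lift_apply, Finsupp.sum_single_index (by simp), one_smul]
    rfl
  have hσcomm : ∀ (H : {H : Subgroup G // Finite H}) (h : H.1) (z : Y.V),
      (σ H.1 H.2).hom (Y.ρ (h : G) z) = X.ρ (h : G) ((σ H.1 H.2).hom z) := by
    intro H h z
    exact Rep.hom_comm_apply (σ H.1 H.2) h z
  have hρtens : ∀ (g : G) (v : N.V) (x : DeltaType G),
      (N ⊗ Rep.ofMulAction R G (DeltaType G)).ρ g (v ⊗ₜ[R] MonoidAlgebra.single x (1:R)) =
        (N.ρ g v) ⊗ₜ[R] MonoidAlgebra.single (g • x) (1:R) := by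
    intro g v x
    show (N.ρ g v) ⊗ₜ[R] ((Rep.ofMulAction R G (DeltaType G)).ρ g (MonoidAlgebra.single x (1:R))) = _
    rw [show (Rep.ofMulAction R G (DeltaType G)).ρ g (MonoidAlgebra.single x (1:R)) =
      MonoidAlgebra.single (g • x) (1:R) from Representation.ofMulAction_single g x 1]
  have key : ∀ (g : G) (v : N.V) (x : DeltaType G),
      L0 ((N.ρ g v) ⊗ₜ[R] MonoidAlgebra.single (g • x) (1:R)) =
        X.ρ g (L0 (v ⊗ₜ[R] MonoidAlgebra.single x (1:R))) := by
    intro g v x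
    set a := x.2.out with ha
    set b := (g • x.2).out with hb
    have hgx1 : (g • x).1 = x.1 := rfl
    have hgx2 : (g • x).2 = g • x.2 := rfl
    have hk : a⁻¹ * g⁻¹ * b ∈ x.1.1 := by
      have h1 : (QuotientGroup.mk b : G ⧸ x.1.1) = QuotientGroup.mk (g * a) := by
        rw [hb, QuotientGroup.out_eq']
        conv_lhs => rw [← QuotientGroup.out_eq' x.2]
        rfl
      have h2 := QuotientGroup.eq.mp h1.symm
      simpa [mul_assoc, mul_inv_rev] using h2
    set k : x.1.1 := ⟨a⁻¹ * g⁻¹ * b, hk⟩ with hkdef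
    set y := F.hom (v ⊗ₜ[R] MonoidAlgebra.single x (1:R)) with hy
    have hFy : F.hom ((N.ρ g v) ⊗ₜ[R] MonoidAlgebra.single (g • x) (1:R)) = Y.ρ g y := by
      rw [← hρtens, hy]
      exact Rep.hom_comm_apply F g _
    rw [L0app, L0app]
    show X.ρ b ((σ x.1.1 x.1.2).hom (Y.ρ b⁻¹
        (F.hom ((N.ρ g v) ⊗ₜ[R] MonoidAlgebra.single (g • x) 1)))) = _
    rw [hFy]
    have e1 : Y.ρ b⁻¹ (Y.ρ g y) = Y.ρ ((k⁻¹ : x.1.1) : G) (Y.ρ a⁻¹ y) := by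
      rw [← Module.End.mul_apply, ← map_mul, ← Module.End.mul_apply, ← map_mul]
      congr 1
      simp [hkdef, mul_assoc]
    erw [e1, hσcomm x.1 k⁻¹, ← Module.End.mul_apply (X.ρ b), ← map_mul]
    have e2 : b * ((k⁻¹ : x.1.1) : G) = g * a := by
      have : ((k⁻¹ : x.1.1) : G) = (a⁻¹ * g⁻¹ * b)⁻¹ := rfl
      rw [this]
      group
    erw [e2, map_mul, Module.End.mul_apply]
  have eL : ∀ z : (N ⊗ Rep.ofMulAction R G (DeltaType G)).V, e.hom (L0 z) = F.hom z := by
    have base : ∀ (v : N.V) (x : DeltaType G),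
        e.hom (L0 (v ⊗ₜ[R] MonoidAlgebra.single x (1:R))) =
          F.hom (v ⊗ₜ[R] MonoidAlgebra.single x (1:R)) := by
      intro v x
      rw [L0app]
      set a := x.2.out with ha
      set z' := (N ⊗ Rep.ofMulAction R G (DeltaType G)).ρ a⁻¹ (v ⊗ₜ[R] MonoidAlgebra.single x (1:R)) with hz'
      have h1 : Y.ρ a⁻¹ (F.hom (v ⊗ₜ[R] MonoidAlgebra.single x 1)) = F.hom z' := by
        rw [hz']
        exact (Rep.hom_comm_apply F a⁻¹ _).symm
      rw [h1]
      have h2 : F.hom z' = f.hom (r.hom z') := rfl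
      have h3 : e.hom ((σ x.1.1 x.1.2).hom (F.hom z')) = F.hom z' := by
        rw [h2]
        exact hσ x.1.1 x.1.2 (r.hom z')
      erw [Rep.hom_comm_apply e a, h3, h1.symm, ← Module.End.mul_apply, ← map_mul,
        mul_inv_cancel, map_one, Module.End.one_apply]
    intro z
    induction z using TensorProduct.induction_on with
    | zero => simp
    | add z1 z2 h1 h2 => rw [map_add, map_add, map_add, h1, h2]
    | tmul v w =>
      induction w using MonoidAlgebra.induction_linear with
      | zero => rw [TensorProduct.tmul_zero]; simp
      | add w1 w2 hw1 hw2 =>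
        rw [TensorProduct.tmul_add, map_add, map_add, map_add, hw1, hw2]
      | single x c =>
        have hsc : v ⊗ₜ[R] MonoidAlgebra.single x c = c • (v ⊗ₜ[R] MonoidAlgebra.single x (1:R)) := by
          rw [TensorProduct.smul_tmul', TensorProduct.smul_tmul, MonoidAlgebra.smul_single,
            smul_eq_mul, mul_one]
        rw [hsc, map_smul, map_smul, map_smul, base]
  have hLcomm : ∀ (g : G) (z : (N ⊗ Rep.ofMulAction R G (DeltaType G)).V),
      L0 ((N ⊗ Rep.ofMulAction R G (DeltaType G)).ρ g z) = X.ρ g (L0 z) := by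
    intro g z
    induction z using TensorProduct.induction_on with
    | zero => simp
    | add z1 z2 h1 h2 => simp only [map_add, h1, h2]
    | tmul v w =>
      induction w using MonoidAlgebra.induction_linear with
      | zero => rw [TensorProduct.tmul_zero]; simp
      | add w1 w2 hw1 hw2 =>
        simp only [TensorProduct.tmul_add, map_add, hw1, hw2]
      | single x c =>
        have hsc : v ⊗ₜ[R] MonoidAlgebra.single x c = c • (v ⊗ₜ[R] MonoidAlgebra.single x (1:R)) := by
          rw [TensorProduct.smul_tmul', TensorProduct.smul_tmul, MonoidAlgebra.smul_single,
            smul_eq_mul, mul_one]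
        simp only [hsc, map_smul, hρtens, key]
  let L : N ⊗ Rep.ofMulAction R G (DeltaType G) ⟶ X :=
    ConcreteCategory.ofHom (C := Rep R G) ⟨L0, fun g => LinearMap.ext fun z => hLcomm g z⟩
  refine ⟨i ≫ L, ?_⟩
  ext w
  show e.hom (L0 (i.hom w)) = f.hom w
  rw [eL (i.hom w)]
  show f.hom (r.hom (i.hom w)) = f.hom w
  rw [← comp_eval i r w, hir]
  rfl

/-- The main homological lemma: mapping the complete resolution of `Q` onto the
finite-length complex `M` and homotoping it down. -/
lemma main_lemma {Q : Rep R G} (T : ℤ → Rep R G) (d : ∀ n : ℤ, T (n+1) ⟶ T n) (π : T 0 ⟶ Q)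
    (hTproj : ∀ n, FProjective R G (T n))
    (hTcx : ∀ n : ℤ, d (n+1) ≫ d n = 0)
    (hπsurj : Function.Surjective π.hom) (hπcx : d 0 ≫ π = 0)
    (hπker : ∀ x, π.hom x = 0 → x ∈ Set.range (d 0).hom)
    (hstar : ∀ Q' : Rep R G, FProjective R G Q' → ∀ (n : ℤ) (φ : T (n+1) ⟶ Q'),
      d (n+1) ≫ φ = 0 → ∃ ψ : T n ⟶ Q', φ = d n ≫ ψ)
    (M : ℕ → Rep R G) (δ : ∀ i : ℕ, M (i+1) ⟶ M i)
    (hδδ : ∀ i, δ (i+1) ≫ δ i = 0)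
    (hproj3 : ∀ i, FProjective R G (M (i+3)))
    (N : ℕ) (hzero : ∀ i, N < i → IsZero (M i))
    (hstep : ∀ (i : ℕ) (W : Rep R G), FProjective R G W → ∀ f : W ⟶ M (i+1), f ≫ δ i = 0 →
       ∃ l : W ⟶ M (i+2), l ≫ δ (i+1) = f)
    (u : Q ⟶ M 1) (hu : u ≫ δ 0 = 0) :
    ∃ ψ : Q ⟶ M 2, ψ ≫ δ 1 = u := by
  -- build the chain map f_j : T j ⟶ M (j+2)
  obtain ⟨f0, hf0⟩ := hstep 0 (T 0) (hTproj 0) (π ≫ u)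
    (by rw [Category.assoc, hu, Limits.comp_zero])
  have stepex : ∀ (j : ℕ) (fj : T (j:ℤ) ⟶ M (j+2)), (d (j:ℤ) ≫ fj) ≫ δ (j+1) = 0 →
      ∃ l : T ((j:ℤ)+1) ⟶ M (j+3), l ≫ δ (j+2) = d (j:ℤ) ≫ fj := fun j fj hfj =>
    hstep (j+1) (T ((j:ℤ)+1)) (hTproj _) (d (j:ℤ) ≫ fj) hfj
  have exF : ∃ f : ∀ j : ℕ, T (j:ℤ) ⟶ M (j+2),
      (f 0 ≫ δ 1 = π ≫ u) ∧ ∀ j : ℕ, f (j+1) ≫ δ (j+2) = d (j:ℤ) ≫ f j := by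
    have inv0 : (d (0:ℤ) ≫ f0) ≫ δ 1 = 0 := by
      rw [Category.assoc, hf0, ← Category.assoc, hπcx, Limits.zero_comp]
    let F : ∀ j : ℕ, Σ' (fj : T (j:ℤ) ⟶ M (j+2)), (d (j:ℤ) ≫ fj) ≫ δ (j+1) = 0 :=
      fun j => Nat.rec ⟨f0, inv0⟩
        (fun j Fj => ⟨(stepex j Fj.1 Fj.2).choose, by
          have hch := (stepex j Fj.1 Fj.2).choose_spec
          rw [Category.assoc, hch, ← Category.assoc]
          show (d ((j:ℤ)+1) ≫ d (j:ℤ)) ≫ Fj.1 = 0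
          rw [hTcx j, Limits.zero_comp]⟩) j
    refine ⟨fun j => (F j).1, hf0, fun j => ?_⟩
    exact (stepex j (F j).1 (F j).2).choose_spec
  obtain ⟨f, hfbot, hchain⟩ := exF
  -- descending homotopy
  have desc : ∀ (m : ℕ) (j : ℕ), N ≤ j + m →
      ∃ (f' : T (j:ℤ) ⟶ M (j+2)) (h : T (j:ℤ) ⟶ M (j+3)),
        d (j:ℤ) ≫ f' = 0 ∧ f' = f j - h ≫ δ (j+2) := by
    intro m
    induction m with
    | zero =>
      intro j hj
      refine ⟨f j, 0, ?_, by rw [Limits.zero_comp, sub_zero]⟩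
      have hz : f (j+1) = 0 := (hzero (j+3) (by omega)).eq_of_tgt _ 0
      rw [← hchain j, hz, Limits.zero_comp]
    | succ m ih =>
      intro j hj
      by_cases hjN : N ≤ j + m
      · exact ih j hjN
      have hj1 : N ≤ (j+1) + m := by omega
      obtain ⟨f'', h'', hd'', heq''⟩ := ih (j+1) hj1
      have hd2 : d ((j:ℤ)+1) ≫ (f'' : T ((j:ℤ)+1) ⟶ M (j+3)) = 0 := hd''
      have heq2 : (f'' : T ((j:ℤ)+1) ⟶ M (j+3)) =
          (f (j+1) : T ((j:ℤ)+1) ⟶ M (j+3)) -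
            (h'' : T ((j:ℤ)+1) ⟶ M (j+4)) ≫ δ (j+3) := heq''
      obtain ⟨ψ, hψ⟩ := hstar (M (j+3)) (hproj3 j) (j:ℤ)
        (f'' : T ((j:ℤ)+1) ⟶ M (j+3)) hd2
      refine ⟨f j - ψ ≫ δ (j+2), ψ, ?_, rfl⟩
      have hch2 : (f (j+1) : T ((j:ℤ)+1) ⟶ M (j+3)) ≫ δ (j+2) = d (j:ℤ) ≫ f j :=
        hchain j
      rw [Preadditive.comp_sub, ← hch2, ← Category.assoc, ← hψ, heq2,
        Preadditive.sub_comp, Category.assoc, hδδ (j+2), Limits.comp_zero, sub_zero,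
        sub_self]
  obtain ⟨f', h, hd0, heq⟩ := desc N 0 (by omega)
  -- f' kills the kernel of π, and f' ≫ δ 1 = π ≫ u
  have hf'δ : f' ≫ δ 1 = π ≫ u := by
    rw [heq, Preadditive.sub_comp, Category.assoc, hδδ 1, Limits.comp_zero, sub_zero, hfbot]
  have hd0' : d (0:ℤ) ≫ f' = 0 := hd0
  obtain ⟨ψ, hψ⟩ := descend π hπsurj f' (fun z hz => by
    obtain ⟨w, hw⟩ := hπker z hz
    rw [← hw, ← comp_eval (d 0) f' w, hd0']
    rfl)
  refine ⟨ψ, cancel_surj π hπsurj ?_⟩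
  rw [← Category.assoc, hψ, hf'δ]

end Aux

/-- If `P_* → A` is an `𝔉`-split resolution of finite length
`n` with `P_i` `𝔉`-projective for all `i ≥ 1`, then the augmented complex is
`𝔉_G`-proper: `Hom_{RG}(Q, -)` keeps it exact for every `𝔉_G`-projective `Q`. -/
theorem finite_length_resolution_FGProper (R : Type) [CommRing R] (G : Type) [Group G]
    (A : Rep R G) (P : Res R G A) (n : ℕ) (hlen : P.LengthLe n)
    (hsplit : P.FSplit) (hproj : ∀ i, 1 ≤ i → FProjective R G (P.P i)) :
    ∀ Q : Rep R G, FGProjective R G Q →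
      (∀ φ : Q ⟶ A, ∃ ψ : Q ⟶ P.P 0, ψ ≫ P.ε = φ) ∧
      (∀ φ : Q ⟶ P.P 0, φ ≫ P.ε = 0 → ∃ ψ : Q ⟶ P.P 1, ψ ≫ P.d 0 = φ) ∧
      (∀ (i : ℕ) (φ : Q ⟶ P.P (i+1)), φ ≫ P.d i = 0 →
        ∃ ψ : Q ⟶ P.P (i+2), ψ ≫ P.d (i+1) = φ) := by
  intro Q hQ
  obtain ⟨T, d, π, hTproj, hTexact, _hTsplit, hπsurj, hπexact, hstar⟩ := hQ
  have hTcx : ∀ m : ℤ, d (m+1) ≫ d m = 0 :=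
    fun m => comp_eq_zero (fun x => (hTexact m _).mpr ⟨x, rfl⟩)
  have hπcx : d 0 ≫ π = 0 :=
    comp_eq_zero (fun x => (hπexact _).mpr ⟨x, rfl⟩)
  have hπker : ∀ x, π.hom x = 0 → x ∈ Set.range (d 0).hom :=
    fun x hx => (hπexact x).mp hx
  have hPε0 : P.d 0 ≫ P.ε = 0 :=
    comp_eq_zero (fun x => (P.exact0 _).mpr ⟨x, rfl⟩)
  have hPdd : ∀ k, P.d (k+1) ≫ P.d k = 0 :=
    fun k => comp_eq_zero (fun x => (P.exact k _).mpr ⟨x, rfl⟩)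
  -- the three lifting instruments coming from 𝔉-splitness
  have lift1 : ∀ (W : Rep R G), FProjective R G W → ∀ f : W ⟶ A,
      ∃ l : W ⟶ P.P 0, l ≫ P.ε = f := by
    intro W hW f
    apply liftC hW P.ε f
    intro K hK
    obtain ⟨t, s, h1, _h2, _h3⟩ := hsplit K hK
    refine ⟨t, fun w => ?_⟩
    exact hom_eval h1 (f.hom w)
  have lift2 : ∀ (W : Rep R G), FProjective R G W → ∀ f : W ⟶ P.P 0, f ≫ P.ε = 0 →
      ∃ l : W ⟶ P.P 1, l ≫ P.d 0 = f := by
    intro W hW f hf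
    apply liftC hW (P.d 0) f
    intro K hK
    obtain ⟨t, s, _h1, h2, _h3⟩ := hsplit K hK
    refine ⟨s 0, fun w => ?_⟩
    have h2' : ((resF R G K).map P.ε ≫ t).hom (f.hom w)
        + (s 0 ≫ (resF R G K).map (P.d 0)).hom (f.hom w) = f.hom w :=
      hom_eval h2 (f.hom w)
    have hεw : P.ε.hom (f.hom w) = 0 := hom_eval hf w
    have e0 : ((resF R G K).map P.ε ≫ t).hom (f.hom w) = 0 := by
      show t.hom (P.ε.hom (f.hom w)) = 0
      rw [hεw]; exact map_zero t.hom
    rw [e0, zero_add] at h2'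
    exact h2'
  have lift3 : ∀ (k : ℕ) (W : Rep R G), FProjective R G W → ∀ f : W ⟶ P.P (k+1),
      f ≫ P.d k = 0 → ∃ l : W ⟶ P.P (k+2), l ≫ P.d (k+1) = f := by
    intro k W hW f hf
    apply liftC hW (P.d (k+1)) f
    intro K hK
    obtain ⟨t, s, _h1, _h2, h3⟩ := hsplit K hK
    refine ⟨s (k+1), fun w => ?_⟩
    have h3' : ((resF R G K).map (P.d k) ≫ s k).hom (f.hom w)
        + (s (k+1) ≫ (resF R G K).map (P.d (k+1))).hom (f.hom w) = f.hom w :=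
      hom_eval (h3 k) (f.hom w)
    have hdw : (P.d k).hom (f.hom w) = 0 := hom_eval hf w
    have e0 : ((resF R G K).map (P.d k) ≫ s k).hom (f.hom w) = 0 := by
      show (s k).hom ((P.d k).hom (f.hom w)) = 0
      rw [hdw]; exact map_zero (s k).hom
    rw [e0, zero_add] at h3'
    exact h3'
  refine ⟨?_, ?_, ?_⟩
  · -- lifting against the augmentation ε
    intro φ
    let M : ℕ → Rep R G := fun i => match i with
      | 0 => A
      | 1 => A
      | (j+2) => P.P j
    let δ : ∀ i : ℕ, M (i+1) ⟶ M i := fun i => match i with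
      | 0 => 0
      | 1 => P.ε
      | (j+2) => P.d j
    have hδδ : ∀ i, δ (i+1) ≫ δ i = 0 := by
      intro i
      match i with
      | 0 => exact Limits.comp_zero
      | 1 => exact hPε0
      | (j+2) => exact hPdd j
    have hzero : ∀ i, n+2 < i → IsZero (M i) := by
      intro i hi
      match i, hi with
      | (j+2), hi => exact hlen j (by omega)
    have hstep : ∀ (i : ℕ) (W : Rep R G), FProjective R G W → ∀ f : W ⟶ M (i+1),
        f ≫ δ i = 0 → ∃ l : W ⟶ M (i+2), l ≫ δ (i+1) = f := by
      intro i W hW f hf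
      match i, f, hf with
      | 0, f, hf => exact lift1 W hW f
      | 1, f, hf => exact lift2 W hW f hf
      | (j+2), f, hf => exact lift3 j W hW f hf
    obtain ⟨ψ, hψ⟩ := main_lemma T d π hTproj hTcx hπsurj hπcx hπker hstar M δ hδδ
      (fun i => hproj (i+1) (by omega)) (n+2) hzero hstep φ Limits.comp_zero
    exact ⟨ψ, hψ⟩
  · -- lifting against d 0
    intro φ hφ
    let M : ℕ → Rep R G := fun i => match i with
      | 0 => A
      | (j+1) => P.P j
    let δ : ∀ i : ℕ, M (i+1) ⟶ M i := fun i => match i with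
      | 0 => P.ε
      | (j+1) => P.d j
    have hδδ : ∀ i, δ (i+1) ≫ δ i = 0 := by
      intro i
      match i with
      | 0 => exact hPε0
      | (j+1) => exact hPdd j
    have hzero : ∀ i, n+1 < i → IsZero (M i) := by
      intro i hi
      match i, hi with
      | (j+1), hi => exact hlen j (by omega)
    have hstep : ∀ (i : ℕ) (W : Rep R G), FProjective R G W → ∀ f : W ⟶ M (i+1),
        f ≫ δ i = 0 → ∃ l : W ⟶ M (i+2), l ≫ δ (i+1) = f := by
      intro i W hW f hf
      match i, f, hf with
      | 0, f, hf => exact lift2 W hW f hf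
      | (j+1), f, hf => exact lift3 j W hW f hf
    obtain ⟨ψ, hψ⟩ := main_lemma T d π hTproj hTcx hπsurj hπcx hπker hstar M δ hδδ
      (fun i => hproj (i+2) (by omega)) (n+1) hzero hstep φ hφ
    exact ⟨ψ, hψ⟩
  · -- lifting against d (i+1)
    intro i0 φ hφ
    let M : ℕ → Rep R G := fun j => P.P (i0 + j)
    let δ : ∀ j : ℕ, M (j+1) ⟶ M j := fun j => P.d (i0 + j)
    have hδδ : ∀ j, δ (j+1) ≫ δ j = 0 := fun j => hPdd (i0 + j)
    have hzero : ∀ j, n < j → IsZero (M j) := fun j hj => hlen (i0 + j) (by omega)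
    have hstep : ∀ (j : ℕ) (W : Rep R G), FProjective R G W → ∀ f : W ⟶ M (j+1),
        f ≫ δ j = 0 → ∃ l : W ⟶ M (j+2), l ≫ δ (j+1) = f := by
      intro j W hW f hf
      exact lift3 (i0 + j) W hW f hf
    obtain ⟨ψ, hψ⟩ := main_lemma T d π hTproj hTcx hπsurj hπcx hπker hstar M δ hδδ
      (fun j => hproj (i0 + j + 3) (by omega)) n hzero hstep φ hφ
    exact ⟨ψ, hψ⟩

end FPaper
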